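/- Let g : ℝ → ℝ be a strictly increasing bijection such that g(x) = x whenever x < −10 or x > 1, g(x) = h(T₋₁⁻¹(h⁻¹(x))) for all x ∈ [−10, −9.8] (where T₋₁⁻¹(x) = 100x + 99 and h⁻¹(y) = 10y for y ≥ 0, h⁻¹(y) = y/10 for y < 0), and g(x) = T₁(x) for all x ∈ [−1, 1]; define g̃ : ℝ → ℝ by g̃(x) = −g(−x). Then every backward orbit accumulates on all of K₋: for every x ∈ ℝ, the set K₋ is contained in the topological closure of the set {y ∈ ℝ : f(y) = x for some f ∈ G}, where G is the submonoid of self-maps of ℝ (under composition) generated by {T₀, T₀⁻¹, g, g̃} and T₀⁻¹(x) = 100x. -/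

import Mathlib

noncomputable section

/-- The affine contraction of ratio 1/100 fixing 0. -/
def T0 (x : ℝ) : ℝ := x / 100

/-- The affine contraction of ratio 1/100 fixing 1. -/
def T1 (x : ℝ) : ℝ := 1 + (x - 1) / 100

/-- The affine contraction of ratio 1/100 fixing -1. -/
def Tm1 (x : ℝ) : ℝ := -1 + (x + 1) / 100

/-- The inverse of `T0`. -/
def T0inv (x : ℝ) : ℝ := 100 * x

/-- The `i`-th iterate of `T0` for `i ≥ 0`, and the `|i|`-th iterate of
`T0⁻¹ : x ↦ 100 x` for `i < 0`. -/
def T0z : ℤ → ℝ → ℝ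
  | Int.ofNat n => T0^[n]
  | Int.negSucc n => T0inv^[n + 1]

/-- The set `K₊ = {0} ∪ ⋃ i ∈ ℤ, T₀^[i] '' (C₁ ∪ C₋₁)` where `C₁ = T₁ '' C`,
`C₋₁ = T₋₁ '' C`. -/
def Kplus (C : Set ℝ) : Set ℝ := {0} ∪ ⋃ i : ℤ, T0z i '' (T1 '' C ∪ Tm1 '' C)

/-- The map `Q : x ↦ x/10`. -/
def Q (x : ℝ) : ℝ := x / 10

/-- The set `K₋ = Q '' K₊`. -/
def Kminus (C : Set ℝ) : Set ℝ := Q '' Kplus C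

/-- The bijection `h` : `x ↦ x/10` for `x ≥ 0`, `x ↦ 10 x` for `x < 0`. -/
def hmap (x : ℝ) : ℝ := if 0 ≤ x then x / 10 else 10 * x

/-- The inverse of `h` : `y ↦ 10 y` for `y ≥ 0`, `y ↦ y/10` for `y < 0`. -/
def hmapInv (y : ℝ) : ℝ := if 0 ≤ y then 10 * y else y / 10

/-- The inverse of `T₋₁` : `x ↦ 100 x + 99`. -/
def Tm1inv (x : ℝ) : ℝ := 100 * x + 99

/-- iterates of T0 scale down -/
lemma T0_iter (n : ℕ) (w : ℝ) : T0^[n] w = w / 100 ^ n := by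
  induction n generalizing w with
  | zero => simp
  | succ n ih =>
    rw [Function.iterate_succ_apply, ih, T0, pow_succ]
    ring

lemma T0inv_iter (n : ℕ) (w : ℝ) : T0inv^[n] w = 100 ^ n * w := by
  induction n generalizing w with
  | zero => simp
  | succ n ih =>
    rw [Function.iterate_succ_apply, ih, T0inv, pow_succ]
    ring

/-- C is contained in [-1,1]. -/
lemma C_subset (C : Set ℝ) (hne : C.Nonempty) (hcomp : IsCompact C)
    (hself : C = Tm1 '' C ∪ T0 '' C ∪ T1 '' C) :
    ∀ c ∈ C, |c| ≤ 1 := by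
  obtain ⟨c₀, hc₀, hmax⟩ := hcomp.exists_isMaxOn hne (continuous_abs.continuousOn)
  have key : |c₀| ≤ 1 := by
    have hc₀' := hc₀
    rw [hself] at hc₀'
    rcases hc₀' with (⟨c', hc', rfl⟩ | ⟨c', hc', rfl⟩) | ⟨c', hc', rfl⟩
    · have h1 : |c'| ≤ |Tm1 c'| := hmax hc'
      rw [Tm1] at *
      have : |(-1 : ℝ) + (c' + 1) / 100| ≤ (|c'| + 99) / 100 := by
        rw [abs_le]; constructor <;> cases abs_le.mp (le_refl |c'|) <;> nlinarith [abs_nonneg c', le_abs_self c', neg_abs_le c']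
      nlinarith [abs_nonneg c', le_abs_self c', neg_abs_le c']
    · have h1 : |c'| ≤ |T0 c'| := hmax hc'
      rw [T0, abs_div] at h1
      have : |(100:ℝ)| = 100 := by norm_num
      rw [this] at h1
      have h2 : |c'| = 0 := by nlinarith [abs_nonneg c']
      rw [T0, abs_div, this, h2]; norm_num
    · have h1 : |c'| ≤ |T1 c'| := hmax hc'
      rw [T1] at *
      have : |(1 : ℝ) + (c' - 1) / 100| ≤ (|c'| + 99) / 100 := by
        rw [abs_le]; constructor <;> nlinarith [le_abs_self c', neg_abs_le c']
      nlinarith [abs_nonneg c', le_abs_self c', neg_abs_le c']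
  intro c hc
  exact le_trans (hmax hc) key

/-- 0 belongs to C. -/
lemma zero_mem_C (C : Set ℝ) (hne : C.Nonempty) (hcomp : IsCompact C)
    (hself : C = Tm1 '' C ∪ T0 '' C ∪ T1 '' C) : (0 : ℝ) ∈ C := by
  obtain ⟨c₀, hc₀⟩ := hne
  have hT0C : ∀ c ∈ C, T0 c ∈ C := by
    intro c hc
    rw [hself]
    exact Or.inl (Or.inr ⟨c, hc, rfl⟩)
  have hiter : ∀ n, T0^[n] c₀ ∈ C := by
    intro n
    induction n with
    | zero => simpa using hc₀
    | succ n ih => rw [Function.iterate_succ_apply']; exact hT0C _ ih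
  have hlim : Filter.Tendsto (fun n => T0^[n] c₀) Filter.atTop (nhds 0) := by
    have : (fun n => T0^[n] c₀) = fun n => c₀ * (1/100 : ℝ) ^ n := by
      funext n; rw [T0_iter]; field_simp; rw [mul_assoc, ← mul_pow]; norm_num
    rw [this]
    have h := tendsto_pow_atTop_nhds_zero_of_lt_one (by norm_num : (0:ℝ) ≤ 1/100) (by norm_num : (1/100:ℝ) < 1)
    simpa using h.const_mul c₀
  have := hcomp.isClosed.mem_of_tendsto hlim (Filter.Eventually.of_forall hiter)
  exact this

/-- Main density engine: any closed set containing 0, closed under scaling by 100 and 1/100,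
and under the two affine "return" moves, contains `Kminus C`. -/
lemma key_lemma (C : Set ℝ) (hne : C.Nonempty) (hcomp : IsCompact C)
    (hself : C = Tm1 '' C ∪ T0 '' C ∪ T1 '' C)
    (D : Set ℝ) (hDclosed : IsClosed D) (h0D : (0:ℝ) ∈ D)
    (hup : ∀ d ∈ D, 100 * d ∈ D)
    (hdown : ∀ d ∈ D, d / 100 ∈ D)
    (hτ1 : ∀ s ∈ D, -(0.1:ℝ) ≤ s → s ≤ 0.1 → s / 100 + 0.099 ∈ D)
    (hτm1 : ∀ s ∈ D, -(0.1:ℝ) ≤ s → s ≤ 0.1 → s / 100 - 0.099 ∈ D) :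
    Kminus C ⊆ D := by
  have hCsub := C_subset C hne hcomp hself
  -- step 1: approximation
  have step1 : ∀ n : ℕ, ∀ c ∈ C, ∃ d ∈ D, -(0.1:ℝ) ≤ d ∧ d ≤ 0.1 ∧ |d - c/10| ≤ (1/100:ℝ)^n := by
    intro n
    induction n with
    | zero =>
      intro c hc
      refine ⟨0, h0D, by norm_num, by norm_num, ?_⟩
      have := hCsub c hc
      rw [abs_le] at this ⊢
      constructor <;> [linarith [this.2]; linarith [this.1]]
    | succ n ih =>
      intro c hc
      rw [hself] at hc
      rcases hc with (⟨c', hc', rfl⟩ | ⟨c', hc', rfl⟩) | ⟨c', hc', rfl⟩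
      · obtain ⟨d, hdD, hd1, hd2, hdist⟩ := ih c' hc'
        refine ⟨d/100 - 0.099, hτm1 d hdD hd1 hd2, by linarith, by linarith, ?_⟩
        have : d/100 - 0.099 - (Tm1 c')/10 = (d - c'/10)/100 := by rw [Tm1]; ring
        rw [this, abs_div]
        have : |(100:ℝ)| = 100 := by norm_num
        rw [this, pow_succ]
        calc |d - c'/10| / 100 ≤ (1/100:ℝ)^n / 100 := by linarith
        _ = (1/100:ℝ)^n * (1/100) := by ring
      · obtain ⟨d, hdD, hd1, hd2, hdist⟩ := ih c' hc'
        refine ⟨d/100, hdown d hdD, by linarith, by linarith, ?_⟩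
        have : d/100 - (T0 c')/10 = (d - c'/10)/100 := by rw [T0]; ring
        rw [this, abs_div]
        have : |(100:ℝ)| = 100 := by norm_num
        rw [this, pow_succ]
        calc |d - c'/10| / 100 ≤ (1/100:ℝ)^n / 100 := by linarith
        _ = (1/100:ℝ)^n * (1/100) := by ring
      · obtain ⟨d, hdD, hd1, hd2, hdist⟩ := ih c' hc'
        refine ⟨d/100 + 0.099, hτ1 d hdD hd1 hd2, by linarith, by linarith, ?_⟩
        have : d/100 + 0.099 - (T1 c')/10 = (d - c'/10)/100 := by rw [T1]; ring
        rw [this, abs_div]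
        have : |(100:ℝ)| = 100 := by norm_num
        rw [this, pow_succ]
        calc |d - c'/10| / 100 ≤ (1/100:ℝ)^n / 100 := by linarith
        _ = (1/100:ℝ)^n * (1/100) := by ring
  -- step 2: Q '' C ⊆ D
  have step2 : ∀ c ∈ C, c / 10 ∈ D := by
    intro c hc
    rw [← hDclosed.closure_eq]
    rw [Metric.mem_closure_iff]
    intro ε hε
    obtain ⟨n, hn⟩ := exists_pow_lt_of_lt_one hε (by norm_num : (1/100:ℝ) < 1)
    obtain ⟨d, hdD, _, _, hdist⟩ := step1 n c hc
    refine ⟨d, hdD, ?_⟩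
    rw [Real.dist_eq]
    calc |c/10 - d| = |d - c/10| := abs_sub_comm _ _
    _ ≤ (1/100:ℝ)^n := hdist
    _ < ε := hn
  -- step 3: Q of C₁ ∪ C₋₁
  have step3 : ∀ w ∈ T1 '' C ∪ Tm1 '' C, w / 10 ∈ D := by
    rintro w (⟨c, hc, rfl⟩ | ⟨c, hc, rfl⟩)
    · have h1 := step2 c hc
      have h2 := hCsub c hc
      rw [abs_le] at h2
      have := hτ1 (c/10) h1 (by linarith [h2.1]) (by linarith [h2.2])
      have heq : T1 c / 10 = (c/10)/100 + 0.099 := by rw [T1]; ring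
      rw [heq]; exact this
    · have h1 := step2 c hc
      have h2 := hCsub c hc
      rw [abs_le] at h2
      have := hτm1 (c/10) h1 (by linarith [h2.1]) (by linarith [h2.2])
      have heq : Tm1 c / 10 = (c/10)/100 - 0.099 := by rw [Tm1]; ring
      rw [heq]; exact this
  -- step 4: scaling stability
  have hupn : ∀ n : ℕ, ∀ d ∈ D, 100^n * d ∈ D := by
    intro n
    induction n with
    | zero => intro d hd; simpa using hd
    | succ n ih =>
      intro d hd
      have := hup _ (ih d hd)
      have heq : (100:ℝ)^(n+1) * d = 100 * (100^n * d) := by ring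
      rw [heq]; exact this
  have hdownn : ∀ n : ℕ, ∀ d ∈ D, d / 100^n ∈ D := by
    intro n
    induction n with
    | zero => intro d hd; simpa using hd
    | succ n ih =>
      intro d hd
      have := hdown _ (ih d hd)
      have heq : d / (100:ℝ)^(n+1) = (d / 100^n) / 100 := by
        rw [pow_succ]; ring
      rw [heq]; exact this
  -- final
  rintro q ⟨k, hk, rfl⟩
  rcases hk with hk | hk
  · rw [Set.mem_singleton_iff] at hk
    subst hk
    simpa [Q] using h0D
  · rw [Set.mem_iUnion] at hk
    obtain ⟨i, w, hw, rfl⟩ := hk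
    have hwD := step3 w hw
    cases i with
    | ofNat n =>
      have : Q (T0z (Int.ofNat n) w) = (w/10) / 100^n := by
        show Q (T0^[n] w) = _
        rw [T0_iter, Q]; ring
      rw [this]
      exact hdownn n _ hwD
    | negSucc n =>
      have : Q (T0z (Int.negSucc n) w) = 100^(n+1) * (w/10) := by
        show Q (T0inv^[n+1] w) = _
        rw [T0inv_iter, Q]; ring
      rw [this]
      exact hupn (n+1) _ hwD

theorem stmt_17 (C : Set ℝ) (hne : C.Nonempty) (hcomp : IsCompact C)
    (hself : C = Tm1 '' C ∪ T0 '' C ∪ T1 '' C)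
    (g : ℝ → ℝ) (hg_mono : StrictMono g) (hg_bij : Function.Bijective g)
    (hg_id : ∀ x : ℝ, x < -10 ∨ 1 < x → g x = x)
    (hg_left : ∀ x ∈ Set.Icc (-10 : ℝ) (-9.8 : ℝ), g x = hmap (Tm1inv (hmapInv x)))
    (hg_T1 : ∀ x ∈ Set.Icc (-1 : ℝ) 1, g x = T1 x) :
    ∀ x : ℝ, Kminus C ⊆ closure {y : ℝ |
      ∃ f ∈ Submonoid.closure ({T0, T0inv, g, fun x => -g (-x)} : Set (Function.End ℝ)),
        f y = x} := by
  intro x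
  set gt : ℝ → ℝ := fun x => -g (-x) with hgt
  set S : Set ℝ := {y : ℝ |
      ∃ f ∈ Submonoid.closure ({T0, T0inv, g, gt} : Set (Function.End ℝ)), f y = x} with hS
  set D : Set ℝ := closure S with hD
  -- invariance of S under preimages of generators
  have hS_inv : ∀ f ∈ ({T0, T0inv, g, gt} : Set (Function.End ℝ)), ∀ y : ℝ, f y ∈ S → y ∈ S := by
    intro f hf y hy
    obtain ⟨f', hf', hf'x⟩ := hy
    exact ⟨f' * f, mul_mem hf' (Submonoid.subset_closure hf), hf'x⟩
  -- generic closure rule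
  have hrule : ∀ f ∈ ({T0, T0inv, g, gt} : Set (Function.End ℝ)),
      ∀ finv : ℝ → ℝ, Continuous finv → (∀ s, f (finv s) = s) → (∀ s, finv (f s) = s) →
      ∀ y : ℝ, f y ∈ D → y ∈ D := by
    intro f hf finv hcont hrinv hlinv y hy
    have h1 : finv '' S ⊆ S := by
      rintro _ ⟨s, hs, rfl⟩
      exact hS_inv f hf (finv s) (by rwa [hrinv s])
    have h2 : y = finv (f y) := (hlinv y).symm
    rw [h2]
    have h3 : finv (f y) ∈ finv '' closure S := ⟨f y, hy, rfl⟩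
    have h4 := image_closure_subset_closure_image hcont h3
    exact closure_mono h1 h4
  -- memberships
  have hmem0 : (T0 : Function.End ℝ) ∈ ({T0, T0inv, g, gt} : Set (Function.End ℝ)) := by
    left; rfl
  have hmem0i : (T0inv : Function.End ℝ) ∈ ({T0, T0inv, g, gt} : Set (Function.End ℝ)) := by
    right; left; rfl
  have hmemg : (g : Function.End ℝ) ∈ ({T0, T0inv, g, gt} : Set (Function.End ℝ)) := by
    right; right; left; rfl
  have hmemgt : (gt : Function.End ℝ) ∈ ({T0, T0inv, g, gt} : Set (Function.End ℝ)) := by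
    right; right; right; rfl
  -- individual rules
  have hcont0 : Continuous T0 := by
    unfold T0; exact continuous_id.div_const 100
  have hcont0i : Continuous T0inv := by
    unfold T0inv; exact continuous_const.mul continuous_id
  have ruleT0 : ∀ y : ℝ, T0 y ∈ D → y ∈ D := by
    refine hrule T0 hmem0 T0inv hcont0i ?_ ?_ <;> intro s <;>
      · show _ = s
        unfold T0 T0inv; ring
  have ruleT0inv : ∀ y : ℝ, T0inv y ∈ D → y ∈ D := by
    refine hrule T0inv hmem0i T0 hcont0 ?_ ?_ <;> intro s <;>
      · show _ = s
        unfold T0 T0inv; ring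
  have ruleg : ∀ y : ℝ, g y ∈ D → y ∈ D :=
    hrule g hmemg (hg_mono.orderIsoOfSurjective g hg_bij.2).symm
      (hg_mono.orderIsoOfSurjective g hg_bij.2).symm.continuous
      (fun s => (hg_mono.orderIsoOfSurjective g hg_bij.2).apply_symm_apply s)
      (fun s => (hg_mono.orderIsoOfSurjective g hg_bij.2).symm_apply_apply s)
  have hgt_mono : StrictMono gt := by
    intro a b hab
    have : g (-b) < g (-a) := hg_mono (by linarith)
    simp only [hgt]
    linarith
  have hgt_surj : Function.Surjective gt := by
    intro z
    obtain ⟨w, hw⟩ := hg_bij.2 (-z)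
    refine ⟨-w, ?_⟩
    show -g (-(-w)) = z
    rw [neg_neg, hw, neg_neg]
  have rulegt : ∀ y : ℝ, gt y ∈ D → y ∈ D :=
    hrule gt hmemgt (hgt_mono.orderIsoOfSurjective gt hgt_surj).symm
      (hgt_mono.orderIsoOfSurjective gt hgt_surj).symm.continuous
      (fun s => (hgt_mono.orderIsoOfSurjective gt hgt_surj).apply_symm_apply s)
      (fun s => (hgt_mono.orderIsoOfSurjective gt hgt_surj).symm_apply_apply s)
  -- scaling rules
  have hup : ∀ d ∈ D, 100 * d ∈ D := by
    intro d hd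
    apply ruleT0
    have : T0 (100 * d) = d := by rw [T0]; ring
    rwa [this]
  have hdown : ∀ d ∈ D, d / 100 ∈ D := by
    intro d hd
    apply ruleT0inv
    have : T0inv (d / 100) = d := by rw [T0inv]; ring
    rwa [this]
  -- the two return moves
  have hτm1 : ∀ s ∈ D, -(0.1:ℝ) ≤ s → s ≤ 0.1 → s / 100 - 0.099 ∈ D := by
    intro s hsD hs1 hs2
    have hyD : s - 9.9 ∈ D := by
      apply ruleg
      have hmemIcc : s - 9.9 ∈ Set.Icc (-10 : ℝ) (-9.8 : ℝ) := by
        constructor <;> · norm_num at hs1 hs2 ⊢; linarith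
      rw [hg_left _ hmemIcc]
      have h1 : hmapInv (s - 9.9) = (s - 9.9) / 10 := by
        rw [hmapInv, if_neg]; linarith
      rw [h1]
      have h2 : Tm1inv ((s - 9.9) / 10) = 10 * s := by rw [Tm1inv]; ring
      rw [h2]
      rcases le_or_gt 0 s with h | h
      · have : hmap (10 * s) = s := by rw [hmap, if_pos (by linarith)]; ring
        rwa [this]
      · have : hmap (10 * s) = 100 * s := by rw [hmap, if_neg (by nlinarith)]; ring
        rw [this]
        exact hup s hsD
    have := hdown _ hyD
    have heq : (s - 9.9) / 100 = s / 100 - 0.099 := by ring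
    rwa [heq] at this
  have hτ1 : ∀ s ∈ D, -(0.1:ℝ) ≤ s → s ≤ 0.1 → s / 100 + 0.099 ∈ D := by
    intro s hsD hs1 hs2
    have hyD : s + 9.9 ∈ D := by
      apply rulegt
      have hmemIcc : -(s + 9.9) ∈ Set.Icc (-10 : ℝ) (-9.8 : ℝ) := by
        constructor <;> · norm_num at hs1 hs2 ⊢; linarith
      have hgtval : gt (s + 9.9) = -g (-(s + 9.9)) := rfl
      rw [hgtval, hg_left _ hmemIcc]
      have h1 : hmapInv (-(s + 9.9)) = -(s + 9.9) / 10 := by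
        rw [hmapInv, if_neg]; push_neg; linarith
      rw [h1]
      have h2 : Tm1inv (-(s + 9.9) / 10) = -10 * s := by rw [Tm1inv]; ring
      rw [h2]
      rcases le_or_gt s 0 with h | h
      · have : hmap (-10 * s) = -s := by rw [hmap, if_pos (by linarith)]; ring
        rw [this, neg_neg]
        exact hsD
      · have : hmap (-10 * s) = -(100 * s) := by
          rw [hmap, if_neg (by nlinarith)]; ring
        rw [this, neg_neg]
        exact hup s hsD
    have := hdown _ hyD
    have heq : (s + 9.9) / 100 = s / 100 + 0.099 := by ring
    rwa [heq] at this
  -- 0 ∈ D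
  have hmemN : ∀ n : ℕ, ∃ f ∈ Submonoid.closure ({T0, T0inv, g, gt} : Set (Function.End ℝ)),
      ∀ y : ℝ, f y = 100 ^ n * y := by
    intro n
    induction n with
    | zero =>
      refine ⟨1, one_mem _, fun y => ?_⟩
      have h1 : (1 : Function.End ℝ) y = y := rfl
      rw [h1]; norm_num
    | succ n ih =>
      obtain ⟨f, hf, hfy⟩ := ih
      have hT0m : (T0inv : Function.End ℝ) ∈
          Submonoid.closure ({T0, T0inv, g, gt} : Set (Function.End ℝ)) :=
        Submonoid.subset_closure hmem0i
      refine ⟨(⟨f, hf⟩ * ⟨T0inv, hT0m⟩ :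
        Submonoid.closure ({T0, T0inv, g, gt} : Set (Function.End ℝ))).1,
        (⟨f, hf⟩ * ⟨T0inv, hT0m⟩ :
        Submonoid.closure ({T0, T0inv, g, gt} : Set (Function.End ℝ))).2, fun y => ?_⟩
      show f (T0inv y) = _
      rw [hfy, T0inv, pow_succ]
      ring
  have h0D : (0:ℝ) ∈ D := by
    rw [hD, Metric.mem_closure_iff]
    intro ε hε
    have hε' : 0 < ε / (|x| + 1) := by positivity
    obtain ⟨n, hn⟩ := exists_pow_lt_of_lt_one hε' (by norm_num : (1/100:ℝ) < 1)
    obtain ⟨f, hf, hfy⟩ := hmemN n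
    refine ⟨x / 100 ^ n, ?_, ?_⟩
    · refine ⟨f, hf, ?_⟩
      rw [hfy]
      field_simp
    · rw [Real.dist_eq]
      have h100 : (0:ℝ) < 100 ^ n := by positivity
      have : |0 - x / 100 ^ n| = |x| * (1/100)^n := by
        rw [zero_sub, abs_neg, abs_div, abs_of_pos h100]
        rw [div_pow, one_pow]
        field_simp
      rw [this]
      have hx1 : |x| < |x| + 1 := by linarith
      calc |x| * (1/100:ℝ)^n ≤ (|x| + 1) * (1/100)^n := by
            have := pow_nonneg (by norm_num : (0:ℝ) ≤ 1/100) n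
            nlinarith [abs_nonneg x]
      _ < (|x| + 1) * (ε / (|x| + 1)) := by
            have : (0:ℝ) < |x| + 1 := by positivity
            exact mul_lt_mul_of_pos_left hn this
      _ = ε := by field_simp
  exact key_lemma C hne hcomp hself D isClosed_closure h0D hup hdown hτ1 hτm1
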